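/- On the phase space R^6 with coordinates (u, v, w, p_u, p_v, p_w) and canonical Poisson bracket, the functions C = u p_u + v p_v + w p_w, V = u² - v² - w², and H = p_u² - p_v² - p_w² satisfy {V, H} = 4C, {C, H} = 2H, and {V, C} = 2V, hence span an sl(2,R) algebra. -/

import Mathlib

/-- Partial derivative of a phase-space function on ℝ⁶ in the `i`-th coordinate. -/
noncomputable def pd6 (i : Fin 6) (F : (Fin 6 → ℝ) → ℝ) (x : Fin 6 → ℝ) : ℝ :=
  fderiv ℝ F x (Pi.single i 1)

/-- Canonical Poisson bracket on ℝ⁶ with coordinates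
(u, v, w, p_u, p_v, p_w) = (x 0, x 1, x 2, x 3, x 4, x 5). -/
noncomputable def pb6 (F G : (Fin 6 → ℝ) → ℝ) (x : Fin 6 → ℝ) : ℝ :=
  pd6 0 F x * pd6 3 G x + pd6 1 F x * pd6 4 G x + pd6 2 F x * pd6 5 G x
    - pd6 3 F x * pd6 0 G x - pd6 4 F x * pd6 1 G x - pd6 5 F x * pd6 2 G x

/-- The dilatation generator C = u p_u + v p_v + w p_w. -/
noncomputable def Cgen : (Fin 6 → ℝ) → ℝ := fun x => x 0 * x 3 + x 1 * x 4 + x 2 * x 5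
/-- V = u² - v² - w². -/
noncomputable def Vgen : (Fin 6 → ℝ) → ℝ := fun x => x 0 ^ 2 - x 1 ^ 2 - x 2 ^ 2
/-- The Bianchi I Hamiltonian H = p_u² - p_v² - p_w². -/
noncomputable def Hgen : (Fin 6 → ℝ) → ℝ := fun x => x 3 ^ 2 - x 4 ^ 2 - x 5 ^ 2

lemma hproj (x : Fin 6 → ℝ) (j : Fin 6) :
    HasFDerivAt (fun x : Fin 6 → ℝ => x j) (ContinuousLinearMap.proj (R := ℝ) (φ := fun _ : Fin 6 => ℝ) j) x :=
  (ContinuousLinearMap.proj (R := ℝ) (φ := fun _ : Fin 6 => ℝ) j).hasFDerivAt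

lemma pd6_C (i : Fin 6) (x : Fin 6 → ℝ) :
    pd6 i Cgen x = (Pi.single i 1 : Fin 6 → ℝ) 0 * x 3 + x 0 * (Pi.single i 1 : Fin 6 → ℝ) 3
      + ((Pi.single i 1 : Fin 6 → ℝ) 1 * x 4 + x 1 * (Pi.single i 1 : Fin 6 → ℝ) 4)
      + ((Pi.single i 1 : Fin 6 → ℝ) 2 * x 5 + x 2 * (Pi.single i 1 : Fin 6 → ℝ) 5) := by
  have h := (((hproj x 0).mul (hproj x 3)).add ((hproj x 1).mul (hproj x 4))).add
      ((hproj x 2).mul (hproj x 5))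
  rw [pd6]; unfold Cgen; rw [HasFDerivAt.fderiv (f := fun x : Fin 6 → ℝ => x 0 * x 3 + x 1 * x 4 + x 2 * x 5) h]
  simp [mul_comm]
  ring

lemma pd6_V (i : Fin 6) (x : Fin 6 → ℝ) :
    pd6 i Vgen x = 2 * x 0 * (Pi.single i 1 : Fin 6 → ℝ) 0 - 2 * x 1 * (Pi.single i 1 : Fin 6 → ℝ) 1
      - 2 * x 2 * (Pi.single i 1 : Fin 6 → ℝ) 2 := by
  have h := (((hproj x 0).mul (hproj x 0)).sub ((hproj x 1).mul (hproj x 1))).sub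
      ((hproj x 2).mul (hproj x 2))
  have e : Vgen = fun x : Fin 6 → ℝ => x 0 * x 0 - x 1 * x 1 - x 2 * x 2 := by
    funext y; simp [Vgen]; ring
  rw [pd6, e, HasFDerivAt.fderiv (f := fun x : Fin 6 → ℝ => x 0 * x 0 - x 1 * x 1 - x 2 * x 2) h]
  simp
  ring

lemma pd6_H (i : Fin 6) (x : Fin 6 → ℝ) :
    pd6 i Hgen x = 2 * x 3 * (Pi.single i 1 : Fin 6 → ℝ) 3 - 2 * x 4 * (Pi.single i 1 : Fin 6 → ℝ) 4
      - 2 * x 5 * (Pi.single i 1 : Fin 6 → ℝ) 5 := by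
  have h := (((hproj x 3).mul (hproj x 3)).sub ((hproj x 4).mul (hproj x 4))).sub
      ((hproj x 5).mul (hproj x 5))
  have e : Hgen = fun x : Fin 6 → ℝ => x 3 * x 3 - x 4 * x 4 - x 5 * x 5 := by
    funext y; simp [Hgen]; ring
  rw [pd6, e, HasFDerivAt.fderiv (f := fun x : Fin 6 → ℝ => x 3 * x 3 - x 4 * x 4 - x 5 * x 5) h]
  simp
  ring

lemma pd6_C0 (x : Fin 6 → ℝ) : pd6 0 Cgen x = x 3 := by
  rw [pd6_C]; simp

lemma pd6_C1 (x : Fin 6 → ℝ) : pd6 1 Cgen x = x 4 := by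
  rw [pd6_C]; simp

lemma pd6_C2 (x : Fin 6 → ℝ) : pd6 2 Cgen x = x 5 := by
  rw [pd6_C]; simp

lemma pd6_C3 (x : Fin 6 → ℝ) : pd6 3 Cgen x = x 0 := by
  rw [pd6_C]; simp

lemma pd6_C4 (x : Fin 6 → ℝ) : pd6 4 Cgen x = x 1 := by
  rw [pd6_C]; simp

lemma pd6_C5 (x : Fin 6 → ℝ) : pd6 5 Cgen x = x 2 := by
  rw [pd6_C]; simp

lemma pd6_V0 (x : Fin 6 → ℝ) : pd6 0 Vgen x = 2 * x 0 := by
  rw [pd6_V]; simp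

lemma pd6_V1 (x : Fin 6 → ℝ) : pd6 1 Vgen x = -(2 * x 1) := by
  rw [pd6_V]; simp

lemma pd6_V2 (x : Fin 6 → ℝ) : pd6 2 Vgen x = -(2 * x 2) := by
  rw [pd6_V]; simp

lemma pd6_V3 (x : Fin 6 → ℝ) : pd6 3 Vgen x = 0 := by
  rw [pd6_V]; simp

lemma pd6_V4 (x : Fin 6 → ℝ) : pd6 4 Vgen x = 0 := by
  rw [pd6_V]; simp

lemma pd6_V5 (x : Fin 6 → ℝ) : pd6 5 Vgen x = 0 := by
  rw [pd6_V]; simp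

lemma pd6_H0 (x : Fin 6 → ℝ) : pd6 0 Hgen x = 0 := by
  rw [pd6_H]; simp

lemma pd6_H1 (x : Fin 6 → ℝ) : pd6 1 Hgen x = 0 := by
  rw [pd6_H]; simp

lemma pd6_H2 (x : Fin 6 → ℝ) : pd6 2 Hgen x = 0 := by
  rw [pd6_H]; simp

lemma pd6_H3 (x : Fin 6 → ℝ) : pd6 3 Hgen x = 2 * x 3 := by
  rw [pd6_H]; simp

lemma pd6_H4 (x : Fin 6 → ℝ) : pd6 4 Hgen x = -(2 * x 4) := by
  rw [pd6_H]; simp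

lemma pd6_H5 (x : Fin 6 → ℝ) : pd6 5 Hgen x = -(2 * x 5) := by
  rw [pd6_H]; simp

/-- the CVH algebra of the Bianchi I model:
{V, H} = 4C, {C, H} = 2H, {V, C} = 2V, hence (C, V, H) span an sl(2,ℝ) algebra. -/
theorem bianchiI_cvh_algebra :
    ∀ x : Fin 6 → ℝ,
      pb6 Vgen Hgen x = 4 * Cgen x ∧ pb6 Cgen Hgen x = 2 * Hgen x ∧
        pb6 Vgen Cgen x = 2 * Vgen x := by
  intro x
  refine ⟨?_, ?_, ?_⟩ <;>
  · simp only [pb6, pd6_C0, pd6_C1, pd6_C2, pd6_C3, pd6_C4, pd6_C5, pd6_V0, pd6_V1, pd6_V2, pd6_V3, pd6_V4, pd6_V5, pd6_H0, pd6_H1, pd6_H2, pd6_H3, pd6_H4, pd6_H5, Cgen, Vgen, Hgen]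
    ring
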